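/- arXiv:0901.3361 — 10 statements merged into one kernel-verified Lean document; each statement's English description precedes it below -/
import Mathlib

section
/- Let x, e₁, e₂ ∈ V with B(x,x) > 0. Then the determinant of the 3×3 Gram matrix with rows (B(x,x), B(x,e₁), B(x,e₂)), (B(x,e₁), B(e₁,e₁), B(e₁,e₂)), (B(x,e₂), B(e₁,e₂), B(e₂,e₂)) is nonnegative. -/
def B (n : ℕ) (x y : Fin (n + 1) → ℝ) : ℝ :=
  x 0 * y 0 - ∑ i : Fin n, x i.succ * y i.succ

lemma B_symm (n : ℕ) (x y : Fin (n + 1) → ℝ) : B n x y = B n y x := by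
  simp [B, mul_comm]

lemma B_add_right (n : ℕ) (x y z : Fin (n + 1) → ℝ) :
    B n x (y + z) = B n x y + B n x z := by
  simp [B, mul_add, Finset.sum_add_distrib]; ring

lemma B_sub_right (n : ℕ) (x y z : Fin (n + 1) → ℝ) :
    B n x (y - z) = B n x y - B n x z := by
  simp [B, mul_sub, Finset.sum_sub_distrib]; ring

lemma B_smul_right (n : ℕ) (t : ℝ) (x y : Fin (n + 1) → ℝ) :
    B n x (t • y) = t * B n x y := by
  simp only [B, Pi.smul_apply, smul_eq_mul, Finset.mul_sum, mul_sub]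
  congr 1
  · ring
  · exact Finset.sum_congr rfl fun i _ => by ring

lemma B_sub_left (n : ℕ) (x y z : Fin (n + 1) → ℝ) :
    B n (y - z) x = B n y x - B n z x := by
  rw [B_symm, B_sub_right, B_symm n x y, B_symm n x z]

lemma B_add_left (n : ℕ) (x y z : Fin (n + 1) → ℝ) :
    B n (y + z) x = B n y x + B n z x := by
  rw [B_symm, B_add_right, B_symm n x y, B_symm n x z]

lemma B_smul_left (n : ℕ) (t : ℝ) (x y : Fin (n + 1) → ℝ) :
    B n (t • y) x = t * B n y x := by
  rw [B_symm, B_smul_right, B_symm]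

lemma neg_on_orth (n : ℕ) (x f : Fin (n + 1) → ℝ) (hx : 0 < B n x x)
    (hf : B n x f = 0) : B n f f ≤ 0 := by
  have hcs := Finset.sum_mul_sq_le_sq_mul_sq Finset.univ
    (fun i : Fin n => x i.succ) (fun i : Fin n => f i.succ)
  have hSf : (0:ℝ) ≤ ∑ i : Fin n, f i.succ ^ 2 :=
    Finset.sum_nonneg fun i _ => sq_nonneg _
  simp only [B] at hx hf ⊢
  have h1 : x 0 * f 0 = ∑ i : Fin n, x i.succ * f i.succ := by linarith
  have h2 : ∑ i : Fin n, x i.succ * x i.succ = ∑ i : Fin n, x i.succ ^ 2 := by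
    simp [sq]
  have h3 : ∑ i : Fin n, f i.succ * f i.succ = ∑ i : Fin n, f i.succ ^ 2 := by
    simp [sq]
  rw [h2] at hx
  rw [h3]
  have hSx : (0:ℝ) ≤ ∑ i : Fin n, x i.succ ^ 2 :=
    Finset.sum_nonneg fun i _ => sq_nonneg _
  have hx0 : (∑ i : Fin n, x i.succ ^ 2) < x 0 ^ 2 := by nlinarith [hx]
  have hxpos : (0:ℝ) < x 0 ^ 2 := lt_of_le_of_lt hSx hx0
  have k1 : (x 0 * f 0) ^ 2 ≤ (∑ i : Fin n, x i.succ ^ 2) * ∑ i : Fin n, f i.succ ^ 2 := by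
    rw [h1]; exact hcs
  have k2 : (∑ i : Fin n, x i.succ ^ 2) * (∑ i : Fin n, f i.succ ^ 2)
      ≤ x 0 ^ 2 * ∑ i : Fin n, f i.succ ^ 2 :=
    mul_le_mul_of_nonneg_right hx0.le hSf
  have k3 : x 0 ^ 2 * f 0 ^ 2 ≤ x 0 ^ 2 * ∑ i : Fin n, f i.succ ^ 2 := by nlinarith [k1, k2]
  have k4 : f 0 ^ 2 ≤ ∑ i : Fin n, f i.succ ^ 2 := le_of_mul_le_mul_left k3 hxpos
  nlinarith [k4]

lemma cauchy (n : ℕ) (x f g : Fin (n + 1) → ℝ) (hx : 0 < B n x x)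
    (hf : B n x f = 0) (hg : B n x g = 0) :
    (B n f g) ^ 2 ≤ B n f f * B n g g := by
  have h : ∀ t : ℝ, 0 ≤ (-B n g g) * (t * t) + (-(2 * B n f g)) * t + (-B n f f) := by
    intro t
    have horth : B n x (f + t • g) = 0 := by
      rw [B_add_right, B_smul_right, hf, hg]; ring
    have hle := neg_on_orth n x (f + t • g) hx horth
    have hexp : B n (f + t • g) (f + t • g) =
        B n f f + 2 * t * B n f g + t * t * B n g g := by
      rw [B_add_left, B_add_right, B_add_right, B_smul_left, B_smul_left,
        B_smul_right, B_smul_right, B_symm n g f]; ring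
    rw [hexp] at hle; linarith
  have hd := discrim_le_zero h
  rw [discrim] at hd
  nlinarith [hd]

/-- If `B(x,x) > 0`, the determinant of the 3×3 Gram matrix of `x, e₁, e₂`
with respect to the Minkowski form is nonnegative. -/
theorem gram_det_nonneg (n : ℕ) (hn : 1 ≤ n) (x e₁ e₂ : Fin (n + 1) → ℝ)
    (hx : 0 < B n x x) :
    0 ≤ Matrix.det
      !![B n x x,  B n x e₁,   B n x e₂;
         B n x e₁, B n e₁ e₁,  B n e₁ e₂;
         B n x e₂, B n e₁ e₂,  B n e₂ e₂] := by
  set a := B n x x with ha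
  set b := B n x e₁ with hb
  set c := B n x e₂ with hc
  set p := B n e₁ e₁ with hp
  set q := B n e₂ e₂ with hq
  set r := B n e₁ e₂ with hr
  set f₁ : Fin (n+1) → ℝ := a • e₁ - b • x with hf₁
  set f₂ : Fin (n+1) → ℝ := a • e₂ - c • x with hf₂
  have ho1 : B n x f₁ = 0 := by
    rw [hf₁, B_sub_right, B_smul_right, B_smul_right]; ring
  have ho2 : B n x f₂ = 0 := by
    rw [hf₂, B_sub_right, B_smul_right, B_smul_right]; ring
  have h11 : B n f₁ f₁ = a * (a * p - b * b) := by
    rw [hf₁]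
    simp only [B_sub_left, B_sub_right, B_smul_left, B_smul_right]
    rw [B_symm n e₁ x]; ring
  have h22 : B n f₂ f₂ = a * (a * q - c * c) := by
    rw [hf₂]
    simp only [B_sub_left, B_sub_right, B_smul_left, B_smul_right]
    rw [B_symm n e₂ x]; ring
  have h12 : B n f₁ f₂ = a * (a * r - b * c) := by
    rw [hf₁, hf₂]
    simp only [B_sub_left, B_sub_right, B_smul_left, B_smul_right]
    rw [B_symm n e₁ x]; ring
  have hA := neg_on_orth n x f₁ hx ho1
  have hQ := neg_on_orth n x f₂ hx ho2
  have hC := cauchy n x f₁ f₂ hx ho1 ho2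
  rw [h11] at hA hC
  rw [h22] at hQ hC
  rw [h12] at hC
  have hA' : a * p - b * b ≤ 0 := by nlinarith
  have hQ' : a * q - c * c ≤ 0 := by nlinarith
  have hC' : (a * r - b * c) ^ 2 ≤ (a * p - b * b) * (a * q - c * c) := by
    nlinarith [mul_pos hx hx]
  simp only [Matrix.det_fin_three, Matrix.cons_val', Matrix.cons_val_zero,
    Matrix.cons_val_one, Matrix.head_cons, Matrix.empty_val', Matrix.cons_val_fin_one,
    Matrix.head_fin_const, Matrix.cons_val_two, Matrix.tail_cons, Matrix.of_apply]
  nlinarith [hC', hx, hA', hQ']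
end

section
/- Let e₁, e₂ ∈ V be null vectors with (e₁)₀ ≥ 0 and (e₂)₀ ≥ 0 (points of the closed boundary of the positive cone), and let x ∈ C⁺ with B(x,x) = 1. Then B(e₁,e₂) ≤ 2·B(x,e₁)·B(x,e₂). -/
lemma B_comm (n : ℕ) (u v : Fin (n + 1) → ℝ) : B n u v = B n v u := by
  simp [B, mul_comm]

lemma B_bilin (n : ℕ) (a b : ℝ) (y u v : Fin (n + 1) → ℝ) :
    B n y (fun i => a * u i + b * v i) = a * B n y u + b * B n y v := by
  have h : ∑ i : Fin n, y i.succ * (a * u i.succ + b * v i.succ)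
      = a * ∑ i : Fin n, y i.succ * u i.succ + b * ∑ i : Fin n, y i.succ * v i.succ := by
    rw [Finset.mul_sum, Finset.mul_sum, ← Finset.sum_add_distrib]
    exact Finset.sum_congr rfl fun i _ => by ring
  simp only [B, h]
  ring

/-- Scalar form of the reverse Cauchy-Schwarz inequality. -/
lemma revCS_aux (X F W V S : ℝ) (hW0 : 0 ≤ W) (hV0 : 0 ≤ V)
    (hCS : S ^ 2 ≤ W * V) (hx : 0 < X * X - W) :
    (F * F - V) * (X * X - W) ≤ (X * F - S) ^ 2 := by
  rcases eq_or_lt_of_le hW0 with hWz | hWpos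
  · have hS : S = 0 := by nlinarith [sq_nonneg S]
    rw [hS, ← hWz]
    nlinarith [sq_nonneg X]
  · nlinarith [sq_nonneg (W * F - X * S), mul_nonneg hx.le (sub_nonneg.mpr hCS), hWpos]

/-- Reverse Cauchy-Schwarz for the Minkowski form. -/
lemma revCS (n : ℕ) (x f : Fin (n + 1) → ℝ) (hx : 0 < B n x x) :
    B n f f * B n x x ≤ B n x f ^ 2 := by
  have hCS := Finset.sum_mul_sq_le_sq_mul_sq Finset.univ
    (fun i : Fin n => x i.succ) (fun i : Fin n => f i.succ)
  have hW : (∑ i : Fin n, x i.succ * x i.succ) = ∑ i : Fin n, x i.succ ^ 2 :=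
    Finset.sum_congr rfl fun i _ => (sq _).symm
  have hV : (∑ i : Fin n, f i.succ * f i.succ) = ∑ i : Fin n, f i.succ ^ 2 :=
    Finset.sum_congr rfl fun i _ => (sq _).symm
  have hW0 : 0 ≤ ∑ i : Fin n, x i.succ ^ 2 := Finset.sum_nonneg fun i _ => sq_nonneg _
  have hV0 : 0 ≤ ∑ i : Fin n, f i.succ ^ 2 := Finset.sum_nonneg fun i _ => sq_nonneg _
  unfold B at hx ⊢
  rw [hW] at hx
  rw [hW, hV]
  have := revCS_aux (x 0) (f 0) (∑ i : Fin n, x i.succ ^ 2) (∑ i : Fin n, f i.succ ^ 2)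
    (∑ i : Fin n, x i.succ * f i.succ) hW0 hV0 hCS hx
  linarith [this]

/-- A null vector orthogonal to a timelike vector is zero. -/
lemma null_orth (n : ℕ) (x e : Fin (n + 1) → ℝ) (hx : 0 < B n x x)
    (he : B n e e = 0) (hxe : B n x e = 0) : ∀ i, e i = 0 := by
  have hCS := Finset.sum_mul_sq_le_sq_mul_sq Finset.univ
    (fun i : Fin n => x i.succ) (fun i : Fin n => e i.succ)
  have hW : (∑ i : Fin n, x i.succ * x i.succ) = ∑ i : Fin n, x i.succ ^ 2 :=
    Finset.sum_congr rfl fun i _ => (sq _).symm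
  have hU : (∑ i : Fin n, e i.succ * e i.succ) = ∑ i : Fin n, e i.succ ^ 2 :=
    Finset.sum_congr rfl fun i _ => (sq _).symm
  set W := ∑ i : Fin n, x i.succ ^ 2 with hWdef
  set U := ∑ i : Fin n, e i.succ ^ 2 with hUdef
  have hW0 : 0 ≤ W := Finset.sum_nonneg fun i _ => sq_nonneg _
  have hU0 : 0 ≤ U := Finset.sum_nonneg fun i _ => sq_nonneg _
  unfold B at hx he hxe
  rw [hW] at hx
  rw [hU] at he
  have hSval : (∑ i : Fin n, x i.succ * e i.succ) = x 0 * e 0 := by linarith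
  rw [hSval] at hCS
  have hUval : U = e 0 * e 0 := by linarith
  rw [hUval] at hCS
  have hsq : e 0 ^ 2 ≤ 0 := by nlinarith [sq_nonneg (e 0)]
  have he0 : e 0 = 0 := by nlinarith [sq_nonneg (e 0)]
  have hUz : U = 0 := by rw [hUval, he0]; ring
  have hsucc : ∀ i : Fin n, e i.succ = 0 := by
    intro i
    have := (Finset.sum_eq_zero_iff_of_nonneg (fun j _ => sq_nonneg (e (Fin.succ j)))).mp hUz
      i (Finset.mem_univ i)
    exact pow_eq_zero_iff (by norm_num) |>.mp this
  intro i
  refine Fin.cases ?_ ?_ i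
  · exact he0
  · exact hsucc

/-- If `e₁, e₂` are null vectors in the closed boundary of the positive cone and
`x` is in the open positive cone with `B(x,x) = 1`, then
`B(e₁,e₂) ≤ 2 B(x,e₁) B(x,e₂)`. -/
theorem null_pairing_le (n : ℕ) (hn : 1 ≤ n) (e₁ e₂ x : Fin (n + 1) → ℝ)
    (he₁ : B n e₁ e₁ = 0) (he₁0 : 0 ≤ e₁ 0)
    (he₂ : B n e₂ e₂ = 0) (he₂0 : 0 ≤ e₂ 0)
    (hx : 0 < B n x x) (hx0 : 0 < x 0) (hxx : B n x x = 1) :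
    B n e₁ e₂ ≤ 2 * B n x e₁ * B n x e₂ := by
  -- nonnegativity of B x e for null e with e 0 ≥ 0
  have key : ∀ e : Fin (n + 1) → ℝ, B n e e = 0 → 0 ≤ e 0 → 0 ≤ B n x e := by
    intro e he he0
    have hCS := Finset.sum_mul_sq_le_sq_mul_sq Finset.univ
      (fun i : Fin n => x i.succ) (fun i : Fin n => e i.succ)
    have hW : (∑ i : Fin n, x i.succ * x i.succ) = ∑ i : Fin n, x i.succ ^ 2 :=
      Finset.sum_congr rfl fun i _ => (sq _).symm
    have hU : (∑ i : Fin n, e i.succ * e i.succ) = ∑ i : Fin n, e i.succ ^ 2 :=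
      Finset.sum_congr rfl fun i _ => (sq _).symm
    have hW0 : 0 ≤ ∑ i : Fin n, x i.succ ^ 2 := Finset.sum_nonneg fun i _ => sq_nonneg _
    have hx' := hx
    unfold B at hx' he ⊢
    rw [hW] at hx'
    rw [hU] at he
    nlinarith [hCS, sq_nonneg (∑ i : Fin n, x i.succ * e i.succ - x 0 * e 0),
      mul_nonneg hx0.le he0]
  have hc₁ : 0 ≤ B n x e₁ := key e₁ he₁ he₁0
  have hc₂ : 0 ≤ B n x e₂ := key e₂ he₂ he₂0
  rcases eq_or_lt_of_le hc₁ with h1 | h1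
  · have hz := null_orth n x e₁ hx he₁ h1.symm
    have : B n e₁ e₂ = 0 := by
      unfold B; simp [hz]
    rw [this, ← h1]; ring_nf; positivity
  rcases eq_or_lt_of_le hc₂ with h2 | h2
  · have hz := null_orth n x e₂ hx he₂ h2.symm
    have : B n e₁ e₂ = 0 := by
      unfold B; simp [hz]
    rw [this, ← h2]; ring_nf; positivity
  -- main case
  set c₁ := B n x e₁
  set c₂ := B n x e₂
  set f : Fin (n + 1) → ℝ := fun i => c₂ * e₁ i + c₁ * e₂ i with hf
  have hBxf : B n x f = 2 * c₁ * c₂ := by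
    rw [hf, B_bilin]; ring
  have hBff : B n f f = 2 * c₁ * c₂ * B n e₁ e₂ := by
    rw [hf, B_bilin, B_comm n f e₁, B_comm n f e₂, hf, B_bilin, B_bilin,
      he₁, he₂, B_comm n e₂ e₁]
    ring
  have h := revCS n x f hx
  rw [hxx, hBxf, hBff] at h
  nlinarith [mul_pos h1 h2]
end

section
/- Let e₁ and e₂ be two distinct primitive integral future-pointing null vectors in V. Then B(e₁,e₂) ≥ 1. -/
open scoped RealInnerProductSpace


/-- The integral vector `z ∈ ℤ^{n+1}` viewed inside `V = ℝ^{n+1}`. -/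
def toReal (n : ℕ) (z : Fin (n + 1) → ℤ) : Fin (n + 1) → ℝ := fun i => (z i : ℝ)

/-- Two distinct primitive integral future-pointing null vectors pair to at least 1. -/
theorem pairing_ge_one (n : ℕ) (hn : 1 ≤ n) (z₁ z₂ : Fin (n + 1) → ℤ)
    (hprim₁ : Finset.univ.gcd z₁ = 1) (hprim₂ : Finset.univ.gcd z₂ = 1)
    (hnull₁ : B n (toReal n z₁) (toReal n z₁) = 0)
    (hnull₂ : B n (toReal n z₂) (toReal n z₂) = 0)
    (hfut₁ : 0 < z₁ 0) (hfut₂ : 0 < z₂ 0)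
    (hne : z₁ ≠ z₂) :
    1 ≤ B n (toReal n z₁) (toReal n z₂) := by
  set x : EuclideanSpace ℝ (Fin n) := WithLp.toLp 2 (fun i : Fin n => (z₁ i.succ : ℝ)) with hxdef
  set y : EuclideanSpace ℝ (Fin n) := WithLp.toLp 2 (fun i : Fin n => (z₂ i.succ : ℝ)) with hydef
  have hinner : ∀ u v : EuclideanSpace ℝ (Fin n), (inner ℝ u v : ℝ) = ∑ i, u i * v i := by
    intro u v
    simp [PiLp.inner_apply, mul_comm]
  have hnx : ‖x‖ = (z₁ 0 : ℝ) := by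
    have h1 : ‖x‖ * ‖x‖ = (z₁ 0 : ℝ) * (z₁ 0 : ℝ) := by
      rw [← real_inner_self_eq_norm_mul_norm, hinner]
      have := hnull₁
      simp only [B, toReal] at this
      linarith
    nlinarith [norm_nonneg x, (show (0:ℝ) < z₁ 0 by exact_mod_cast hfut₁)]
  have hny : ‖y‖ = (z₂ 0 : ℝ) := by
    have h1 : ‖y‖ * ‖y‖ = (z₂ 0 : ℝ) * (z₂ 0 : ℝ) := by
      rw [← real_inner_self_eq_norm_mul_norm, hinner]
      have := hnull₂
      simp only [B, toReal] at this
      linarith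
    nlinarith [norm_nonneg y, (show (0:ℝ) < z₂ 0 by exact_mod_cast hfut₂)]
  have hBeq : B n (toReal n z₁) (toReal n z₂)
      = ((z₁ 0 * z₂ 0 - ∑ i : Fin n, z₁ i.succ * z₂ i.succ : ℤ) : ℝ) := by
    simp [B, toReal]
  have hlt : (inner ℝ x y : ℝ) < ‖x‖ * ‖y‖ := by
    rw [inner_lt_norm_mul_iff_real, hnx, hny]
    intro heq
    have hcomp : ∀ i : Fin n, z₂ 0 * z₁ i.succ = z₁ 0 * z₂ i.succ := by
      intro i
      have := congrArg (fun v => v i) heq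
      simp [hxdef, hydef] at this
      exact_mod_cast this
    have hall : (fun i => z₂ 0 * z₁ i) = fun i => z₁ 0 * z₂ i := by
      funext i
      refine Fin.cases ?_ ?_ i
      · ring
      · exact hcomp
    have hg : z₂ 0 = z₁ 0 := by
      have h1 : (Finset.univ.gcd fun i => z₂ 0 * z₁ i) = normalize (z₂ 0) * Finset.univ.gcd z₁ :=
        Finset.gcd_mul_left
      have h2 : (Finset.univ.gcd fun i => z₁ 0 * z₂ i) = normalize (z₁ 0) * Finset.univ.gcd z₂ :=
        Finset.gcd_mul_left
      rw [hall, h2, hprim₂] at h1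
      rw [hprim₁] at h1
      simpa [Int.normalize_of_nonneg hfut₁.le, Int.normalize_of_nonneg hfut₂.le] using h1.symm
    apply hne
    funext i
    have := congrFun hall i
    rw [hg] at this
    exact mul_left_cancel₀ hfut₁.ne' this
  have hBpos : 0 < B n (toReal n z₁) (toReal n z₂) := by
    rw [hnx, hny, hinner] at hlt
    have : (∑ i : Fin n, (z₁ i.succ : ℝ) * (z₂ i.succ : ℝ)) < (z₁ 0 : ℝ) * (z₂ 0 : ℝ) := by
      simpa [hxdef, hydef] using hlt
    simp only [B, toReal]
    linarith
  rw [hBeq] at hBpos ⊢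
  exact_mod_cast hBpos
end

section
/- Let y ∈ C⁺ and let M be a real number. Then the set of primitive integral future-pointing null vectors e ∈ V with B(y,e) ≤ M is finite. (Equivalently: for any c > 0, the point y lies in only finitely many of the horoballs cU_e attached to the rational boundary points of hyperbolic space.) -/
/-- For any point `y` of the open positive cone and any bound `M`, there are only finitely
many primitive integral future-pointing null vectors `e` with `B(y,e) ≤ M`. -/
theorem finitely_many_horoballs (n : ℕ) (hn : 1 ≤ n) (y : Fin (n + 1) → ℝ)
    (hy : 0 < B n y y) (hy0 : 0 < y 0) (M : ℝ) :
    {z : Fin (n + 1) → ℤ | Finset.univ.gcd z = 1 ∧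
      B n (toReal n z) (toReal n z) = 0 ∧ 0 < z 0 ∧
      B n y (toReal n z) ≤ M}.Finite := by
  set S : ℝ := ∑ i : Fin n, y i.succ * y i.succ with hS
  have hS0 : 0 ≤ S := Finset.sum_nonneg fun i _ => mul_self_nonneg _
  have hSlt : S < y 0 ^ 2 := by
    have := hy
    unfold B at this
    nlinarith
  have hsqrt : Real.sqrt S < y 0 := by
    have := Real.sqrt_lt_sqrt hS0 hSlt
    rwa [Real.sqrt_sq hy0.le] at this
  set c : ℝ := y 0 - Real.sqrt S with hc
  have hcpos : 0 < c := by simp [hc]; linarith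
  set N : ℤ := max 0 ⌈M / c⌉ with hN
  have key : ∀ z ∈ {z : Fin (n + 1) → ℤ | Finset.univ.gcd z = 1 ∧
      B n (toReal n z) (toReal n z) = 0 ∧ 0 < z 0 ∧
      B n y (toReal n z) ≤ M}, ∀ i, z i ∈ Set.Icc (-N) N := by
    rintro z ⟨-, hnull, hpos, hM⟩ i
    -- null: (z 0)^2 = ∑ (z i.succ)^2 (over ℝ)
    have hnull' : ((z 0 : ℝ)) * (z 0 : ℝ) = ∑ i : Fin n, (z i.succ : ℝ) * (z i.succ : ℝ) := by
      unfold B toReal at hnull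
      linarith
    have hz0 : (0 : ℝ) < (z 0 : ℝ) := by exact_mod_cast hpos
    -- Cauchy-Schwarz
    have hcs : (∑ i : Fin n, y i.succ * (z i.succ : ℝ)) ^ 2 ≤
        S * ((z 0 : ℝ) * (z 0 : ℝ)) := by
      rw [hnull', hS]
      calc (∑ i : Fin n, y i.succ * (z i.succ : ℝ)) ^ 2
          ≤ (∑ i : Fin n, y i.succ ^ 2) * (∑ i : Fin n, ((z i.succ : ℝ)) ^ 2) :=
            Finset.sum_mul_sq_le_sq_mul_sq _ _ _
        _ = (∑ i : Fin n, y i.succ * y i.succ) * (∑ i : Fin n, ((z i.succ : ℝ)) * (z i.succ : ℝ)) := by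
            simp [sq]
    have hcs' : (∑ i : Fin n, y i.succ * (z i.succ : ℝ)) ≤ Real.sqrt S * (z 0 : ℝ) := by
      have h1 : (∑ i : Fin n, y i.succ * (z i.succ : ℝ)) ≤
          Real.sqrt ((∑ i : Fin n, y i.succ * (z i.succ : ℝ)) ^ 2) := by
        rw [Real.sqrt_sq_eq_abs]; exact le_abs_self _
      have h2 : Real.sqrt ((∑ i : Fin n, y i.succ * (z i.succ : ℝ)) ^ 2) ≤
          Real.sqrt (S * ((z 0 : ℝ) * (z 0 : ℝ))) := Real.sqrt_le_sqrt hcs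
      have h3 : Real.sqrt (S * ((z 0 : ℝ) * (z 0 : ℝ))) = Real.sqrt S * (z 0 : ℝ) := by
        rw [Real.sqrt_mul hS0, Real.sqrt_mul_self hz0.le]
      linarith
    -- main bound on z 0
    have hBy : y 0 * (z 0 : ℝ) - (∑ i : Fin n, y i.succ * (z i.succ : ℝ)) ≤ M := by
      unfold B toReal at hM; exact hM
    have hz0M : c * (z 0 : ℝ) ≤ M := by
      have : c * (z 0 : ℝ) = y 0 * (z 0 : ℝ) - Real.sqrt S * (z 0 : ℝ) := by ring
      nlinarith
    have hz0le : (z 0 : ℝ) ≤ M / c := (le_div_iff₀' hcpos).mpr hz0M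
    have hz0N : z 0 ≤ N := by
      have : (z 0 : ℝ) ≤ (N : ℝ) := by
        refine hz0le.trans ?_
        calc M / c ≤ (⌈M / c⌉ : ℝ) := Int.le_ceil _
          _ ≤ (N : ℝ) := by exact_mod_cast le_max_right 0 ⌈M / c⌉
      exact_mod_cast this
    -- every coordinate bounded by z 0 in absolute value
    have habs : |z i| ≤ z 0 := by
      rcases Fin.eq_zero_or_eq_succ i with hi | ⟨j, hj⟩
      · rw [hi, abs_of_pos hpos]
      · subst hj
        have hsq : ((z j.succ : ℝ)) * ((z j.succ : ℝ)) ≤ (z 0 : ℝ) * (z 0 : ℝ) := by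
          rw [hnull']
          exact Finset.single_le_sum (f := fun i => (z i.succ : ℝ) * (z i.succ : ℝ))
            (fun i _ => mul_self_nonneg _) (Finset.mem_univ j)
        have habsR : |(z j.succ : ℝ)| ≤ (z 0 : ℝ) := by
          nlinarith [abs_mul_abs_self ((z j.succ : ℝ)), abs_nonneg ((z j.succ : ℝ))]
        exact_mod_cast habsR
    constructor
    · linarith [neg_abs_le (z i), habs]
    · exact le_trans (le_trans (le_abs_self _) habs) hz0N
  apply Set.Finite.subset (Set.Finite.pi (fun _ : Fin (n+1) => Set.finite_Icc (-N) N))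
  intro z hz
  exact fun i _ => key z hz i
end

section
/- Let G be a subgroup of O⁺(ℤ), let y ∈ C⁺, let p be a primitive integral future-pointing null vector, and let c > 0. Then the intersection of the G-orbit of y with the horoball {x : B(x,p) ≤ c·√(B(x,x))} is a finite union of orbits of the stabilizer G_p = {h ∈ G : h(p) = p}: there is a finite subset F ⊆ G such that every g ∈ G with B(g(y),p) ≤ c·√(B(y,y)) satisfies g(y) = h(f(y)) for some h ∈ G_p and some f ∈ F. -/
/-- The integral lattice `ℤ^{n+1} ⊆ ℝ^{n+1}`. -/
def intLattice (n : ℕ) : Set (Fin (n + 1) → ℝ) := {x | ∀ i, ∃ m : ℤ, x i = (m : ℝ)}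

/-- The open positive cone `C⁺ = {x : B(x,x) > 0, x₀ > 0}`. -/
def posCone (n : ℕ) : Set (Fin (n + 1) → ℝ) := {x | 0 < B n x x ∧ 0 < x 0}

/-- Membership in `O⁺(ℤ)`: a linear automorphism of `V` preserving the Minkowski form,
mapping the lattice `ℤ^{n+1}` onto itself and the open positive cone onto itself. -/
def InOplusZ (n : ℕ) (g : (Fin (n + 1) → ℝ) ≃ₗ[ℝ] (Fin (n + 1) → ℝ)) : Prop :=
  (∀ x y, B n (g x) (g y) = B n x y) ∧
  g '' intLattice n = intLattice n ∧
  g '' posCone n = posCone n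


lemma B_expand (n : ℕ) (x z : Fin (n + 1) → ℝ) (t : ℝ) :
    B n (x + t • z) (x + t • z) = B n x x + 2 * t * B n x z + t ^ 2 * B n z z := by
  simp only [B, Pi.add_apply, Pi.smul_apply, smul_eq_mul, mul_add, add_mul,
    Finset.sum_add_distrib]
  have h1 : ∑ i : Fin n, x i.succ * (t * z i.succ) = t * ∑ i : Fin n, x i.succ * z i.succ := by
    rw [Finset.mul_sum]; exact Finset.sum_congr rfl fun i _ => by ring
  have h2 : ∑ i : Fin n, t * z i.succ * x i.succ = t * ∑ i : Fin n, x i.succ * z i.succ := by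
    rw [Finset.mul_sum]; exact Finset.sum_congr rfl fun i _ => by ring
  have h3 : ∑ i : Fin n, t * z i.succ * (t * z i.succ)
      = t ^ 2 * ∑ i : Fin n, z i.succ * z i.succ := by
    rw [Finset.mul_sum]; exact Finset.sum_congr rfl fun i _ => by ring
  rw [h1, h2, h3]; ring

/-- sum of squares of space components of a null vector -/
lemma null_sum (n : ℕ) (q : Fin (n + 1) → ℝ) (h : B n q q = 0) :
    ∑ i : Fin n, q i.succ ^ 2 = q 0 ^ 2 := by
  have : q 0 * q 0 - ∑ i : Fin n, q i.succ * q i.succ = 0 := h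
  have := sub_eq_zero.mp this
  calc ∑ i : Fin n, q i.succ ^ 2 = ∑ i : Fin n, q i.succ * q i.succ := by
        exact Finset.sum_congr rfl fun i _ => sq (q i.succ)
    _ = q 0 * q 0 := this.symm
    _ = q 0 ^ 2 := (sq (q 0)).symm

/-- Key lower bound: for `y` in the positive cone and `q` null future-like,
`B(y,q) ≥ (y₀ - ‖y'‖) q₀`. -/
lemma factA (n : ℕ) (y q : Fin (n + 1) → ℝ) (hy : y ∈ posCone n)
    (hq : B n q q = 0) (hq0 : 0 ≤ q 0) :
    (y 0 - Real.sqrt (∑ i : Fin n, y i.succ ^ 2)) * q 0 ≤ B n y q := by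
  have hcs := Real.sum_mul_le_sqrt_mul_sqrt Finset.univ (fun i : Fin n => y i.succ)
    (fun i : Fin n => q i.succ)
  rw [null_sum n q hq, Real.sqrt_sq hq0] at hcs
  have : B n y q = y 0 * q 0 - ∑ i : Fin n, y i.succ * q i.succ := rfl
  rw [this]
  nlinarith [hcs]

lemma ypos_sub (n : ℕ) (y : Fin (n + 1) → ℝ) (hy : y ∈ posCone n) :
    0 < y 0 - Real.sqrt (∑ i : Fin n, y i.succ ^ 2) := by
  obtain ⟨hB, h0⟩ := hy
  have hBB : ∑ i : Fin n, y i.succ ^ 2 < y 0 ^ 2 := by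
    have : y 0 * y 0 - ∑ i : Fin n, y i.succ * y i.succ > 0 := hB
    have hsq : ∑ i : Fin n, y i.succ ^ 2 = ∑ i : Fin n, y i.succ * y i.succ :=
      Finset.sum_congr rfl fun i _ => sq (y i.succ)
    nlinarith
  have h := Real.sqrt_lt_sqrt (Finset.sum_nonneg fun i _ => sq_nonneg _) hBB
  rw [Real.sqrt_sq h0.le] at h
  linarith

/-- The intersection of the `G`-orbit of a point `y ∈ C⁺` with any horoball
`{x : B(x,p) ≤ c √(B(x,x))}` at a primitive integral future-pointing null vector `p`
is a finite union of orbits of the stabilizer `G_p`. -/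
theorem orbit_meets_horoball_in_finitely_many_stabilizer_orbits
    (n : ℕ) (hn : 1 ≤ n)
    (G : Subgroup ((Fin (n + 1) → ℝ) ≃ₗ[ℝ] (Fin (n + 1) → ℝ)))
    (hG : ∀ g ∈ G, InOplusZ n g)
    (y : Fin (n + 1) → ℝ) (hy : y ∈ posCone n)
    (p : Fin (n + 1) → ℤ) (hprim : Finset.univ.gcd p = 1)
    (hnull : B n (toReal n p) (toReal n p) = 0) (hfut : 0 < p 0)
    (c : ℝ) (hc : 0 < c) :
    ∃ F : Finset ((Fin (n + 1) → ℝ) ≃ₗ[ℝ] (Fin (n + 1) → ℝ)),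
      (↑F : Set ((Fin (n + 1) → ℝ) ≃ₗ[ℝ] (Fin (n + 1) → ℝ))) ⊆ (G : Set _) ∧
      ∀ g ∈ G, B n (g y) (toReal n p) ≤ c * Real.sqrt (B n y y) →
        ∃ h ∈ G, h (toReal n p) = toReal n p ∧ ∃ f ∈ F, g y = h (f y) := by
  classical
  set p' := toReal n p with hp'def
  have hp'lat : p' ∈ intLattice n := fun i => ⟨p i, rfl⟩
  have hp'0 : 0 < p' 0 := by
    show (0 : ℝ) < (p 0 : ℝ)
    exact_mod_cast hfut
  set C := c * Real.sqrt (B n y y) with hCdef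
  set a := Real.sqrt (∑ i : Fin n, y i.succ ^ 2) with hadef
  have hδ : 0 < y 0 - a := ypos_sub n y hy
  set N := C / (y 0 - a) with hNdef
  set M : ℤ := ⌈N⌉ with hMdef
  -- the finite box
  set T : Set (Fin (n + 1) → ℝ) :=
    Set.pi Set.univ (fun _ : Fin (n + 1) => (fun m : ℤ => (m : ℝ)) '' Set.Icc (-M) M)
    with hTdef
  have hTfin : T.Finite := Set.Finite.pi (fun _ => (Set.finite_Icc (-M) M).image _)
  -- the set of relevant group elements and the key map
  set A : Set ((Fin (n + 1) → ℝ) ≃ₗ[ℝ] (Fin (n + 1) → ℝ)) :=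
    {g | g ∈ G ∧ B n (g y) p' ≤ C} with hAdef
  -- key claim: for g ∈ A, q := g⁻¹ p' lies in T
  have key : ∀ g ∈ A, (g⁻¹ : (Fin (n + 1) → ℝ) ≃ₗ[ℝ] (Fin (n + 1) → ℝ)) p' ∈ T := by
    intro g hgA
    obtain ⟨hg, hle⟩ := hgA
    set q := (g⁻¹ : (Fin (n + 1) → ℝ) ≃ₗ[ℝ] (Fin (n + 1) → ℝ)) p' with hqdef
    have hginv : g⁻¹ ∈ G := inv_mem hg
    have hgq : g q = p' := by
      show (g * g⁻¹) p' = p'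
      rw [mul_inv_cancel]; rfl
    -- q is integral
    have hqlat : q ∈ intLattice n := by
      have := (hG g⁻¹ hginv).2.1
      rw [← this]
      exact ⟨p', hp'lat, rfl⟩
    -- q is null
    have hqnull : B n q q = 0 := by
      have := (hG g⁻¹ hginv).1 p' p'
      rw [← hqdef] at this
      rw [this]; exact hnull
    -- B (g y) p' = B y q
    have hByq : B n y q = B n (g y) p' := by
      conv_rhs => rw [← hgq]
      exact ((hG g hg).1 y q).symm
    -- q 0 ≥ 0
    have hq0 : 0 ≤ q 0 := by
      -- y + s • p' ∈ posCone for s > 0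
      have hByp : 0 < B n y p' := by
        have := factA n y p' hy hnull hp'0.le
        nlinarith
      have hw : (g⁻¹ : (Fin (n + 1) → ℝ) ≃ₗ[ℝ] (Fin (n + 1) → ℝ)) y ∈ posCone n := by
        have := (hG g⁻¹ hginv).2.2
        rw [← this]; exact ⟨y, hy, rfl⟩
      set w := (g⁻¹ : (Fin (n + 1) → ℝ) ≃ₗ[ℝ] (Fin (n + 1) → ℝ)) y with hwdef
      by_contra hneg
      push_neg at hneg
      set s := (w 0 + 1) / (-(q 0)) with hsdef
      have hs : 0 < s := div_pos (by linarith [hw.2]) (by linarith)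
      have hmem : y + s • p' ∈ posCone n := by
        constructor
        · rw [B_expand]
          have hyy := hy.1
          nlinarith
        · have : (y + s • p') 0 = y 0 + s * p' 0 := rfl
          rw [this]
          have := hy.2
          nlinarith
      have hmem2 : w + s • q ∈ posCone n := by
        have him := (hG g⁻¹ hginv).2.2
        rw [← him]
        refine ⟨y + s • p', hmem, ?_⟩
        rw [map_add, map_smul]
      have h0 : 0 < w 0 + s * q 0 := by
        have : (w + s • q) 0 = w 0 + s * q 0 := rfl
        rw [← this]; exact hmem2.2
      have hq0ne : q 0 ≠ 0 := ne_of_lt hneg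
      have hcalc : s * q 0 = -(w 0 + 1) := by
        rw [hsdef, div_neg, neg_mul, div_mul_cancel₀ _ hq0ne]
      rw [hcalc] at h0
      linarith
    -- the bound
    have hBle : B n y q ≤ C := by rw [hByq]; exact hle
    have hlow := factA n y q hy hqnull hq0
    have hq0le : q 0 ≤ N := by
      rw [hNdef, le_div_iff₀ hδ]
      calc q 0 * (y 0 - a) = (y 0 - a) * q 0 := mul_comm _ _
        _ ≤ B n y q := hlow
        _ ≤ C := hBle
    -- coordinates bounded
    have hcoord : ∀ i : Fin (n + 1), |q i| ≤ N := by
      intro i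
      have hsum := null_sum n q hqnull
      have habs : ∀ i : Fin (n + 1), |q i| ≤ q 0 := by
        intro i
        rcases Fin.eq_zero_or_eq_succ i with h | ⟨j, hj⟩
        · rw [h, abs_of_nonneg hq0]
        · rw [hj]
          have h1 : q (Fin.succ j) ^ 2 ≤ ∑ k : Fin n, q k.succ ^ 2 :=
            Finset.single_le_sum (fun k _ => sq_nonneg (q k.succ)) (Finset.mem_univ j)
          rw [hsum] at h1
          calc |q (Fin.succ j)| = Real.sqrt (q (Fin.succ j) ^ 2) :=
                (Real.sqrt_sq_eq_abs _).symm
            _ ≤ Real.sqrt (q 0 ^ 2) := Real.sqrt_le_sqrt h1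
            _ = q 0 := by rw [Real.sqrt_sq hq0]
      exact (habs i).trans hq0le
    -- conclude q ∈ T
    intro i _
    obtain ⟨m, hm⟩ := hqlat i
    refine ⟨m, ?_, hm.symm⟩
    have hmabs : |(m : ℝ)| ≤ N := by rw [← hm]; exact hcoord i
    have h1 : (m : ℝ) ≤ N := (le_abs_self _).trans hmabs
    have h2 : -N ≤ (m : ℝ) := neg_le_of_abs_le hmabs
    constructor
    · have : (-M : ℝ) ≤ (m : ℝ) := by
        push_cast
        calc (-(M : ℝ)) ≤ -N := by simp only [neg_le_neg_iff]; exact Int.le_ceil N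
          _ ≤ (m : ℝ) := h2
      exact_mod_cast this
    · have : (m : ℝ) ≤ (M : ℝ) := h1.trans (Int.le_ceil N)
      exact_mod_cast this
  -- the image set K is finite
  set Φ : ((Fin (n + 1) → ℝ) ≃ₗ[ℝ] (Fin (n + 1) → ℝ)) → (Fin (n + 1) → ℝ) :=
    fun g => (g⁻¹ : (Fin (n + 1) → ℝ) ≃ₗ[ℝ] (Fin (n + 1) → ℝ)) p' with hΦdef
  set K := Φ '' A with hKdef
  have hKfin : K.Finite := hTfin.subset (by rintro v ⟨g, hg, rfl⟩; exact key g hg)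
  -- choose representatives
  have hrep : ∀ v : Fin (n + 1) → ℝ,
      ∃ g : (Fin (n + 1) → ℝ) ≃ₗ[ℝ] (Fin (n + 1) → ℝ), v ∈ K → g ∈ A ∧ Φ g = v := by
    intro v
    by_cases hv : v ∈ K
    · obtain ⟨g, hg, hgv⟩ := hv
      exact ⟨g, fun _ => ⟨hg, hgv⟩⟩
    · exact ⟨1, fun h => absurd h hv⟩
  choose r hr using hrep
  refine ⟨hKfin.toFinset.image r, ?_, ?_⟩
  · intro f hf
    simp only [Finset.coe_image, Set.mem_image, Finset.mem_coe] at hf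
    obtain ⟨v, hv, rfl⟩ := hf
    rw [Set.Finite.mem_toFinset] at hv
    exact ((hr v hv).1).1
  · intro g hg hle
    have hgA : g ∈ A := ⟨hg, hle⟩
    have hv : Φ g ∈ K := ⟨g, hgA, rfl⟩
    set f := r (Φ g) with hfdef
    obtain ⟨hfA, hfΦ⟩ := hr (Φ g) hv
    refine ⟨g * f⁻¹, mul_mem hg (inv_mem hfA.1), ?_, f, ?_, ?_⟩
    · show g (f⁻¹ p') = p'
      have : f⁻¹ p' = Φ f := rfl
      rw [this, hfΦ]
      show (g * g⁻¹) p' = p'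
      rw [mul_inv_cancel]; rfl
    · rw [Finset.mem_image]
      exact ⟨Φ g, hKfin.mem_toFinset.mpr hv, rfl⟩
    · show g y = g (f⁻¹ (f y))
      congr 1
      have h1 : (f⁻¹ * f) y = y := by rw [inv_mul_cancel]; rfl
      exact h1.symm
end

section
/- (Local finiteness of the Dirichlet decomposition.) Let G be a subgroup of O⁺(ℤ). Let 𝒫 be a collection of rational polyhedral cones in V, each contained in the closed positive cone {x ∈ V : B(x,x) ≥ 0 and x₀ ≥ 0}, such that (i) g(P) ∈ 𝒫 for every g ∈ G and P ∈ 𝒫, (ii) there is a finite subcollection 𝒫₀ ⊆ 𝒫 such that every P ∈ 𝒫 equals g(P₀) for some g ∈ G and P₀ ∈ 𝒫₀, and (iii) the union C = ⋃_{P ∈ 𝒫} P is a convex set. Let y ∈ ℚ^{n+1} lie in the topological interior of some member of 𝒫 with trivial stabilizer in G, and let D = {x ∈ closure(C) : B(x,y) ≤ B(x,g(y)) for all g ∈ G}. Then the collection of cones {g(D) : g ∈ G} is locally finite in the open positive cone: for every compact subset K ⊆ C⁺, the set of cones {g(D) : g ∈ G, g(D) ∩ K ≠ ∅} is finite. -/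
/-- The closed positive cone `{x : B(x,x) ≥ 0, x₀ ≥ 0}`. -/
def closedPosCone (n : ℕ) : Set (Fin (n + 1) → ℝ) := {x | 0 ≤ B n x x ∧ 0 ≤ x 0}

/-- A rational polyhedral cone: the set of nonnegative real linear combinations of a
finite set of integral vectors. -/
def IsRatPolyCone (n : ℕ) (P : Set (Fin (n + 1) → ℝ)) : Prop :=
  ∃ s : Finset (Fin (n + 1) → ℤ),
    P = {x | ∃ c : (Fin (n + 1) → ℤ) → ℝ, (∀ v, 0 ≤ c v) ∧
      x = ∑ v ∈ s, c v • toReal n v}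

/-- Auxiliary: a bounded set of vectors with coordinates in `(1/N)ℤ` is finite. -/
lemma aux_lat_finite (k : ℕ) (N : ℤ) (hN : (0:ℝ) < (N:ℝ)) (R : ℝ) :
    {z : Fin k → ℝ | (∀ i, ∃ m : ℤ, (N:ℝ) * z i = (m:ℝ)) ∧ ∀ i, |z i| ≤ R}.Finite := by
  have hinj : Set.InjOn (fun (z : Fin k → ℝ) (i : Fin k) => ⌊(N:ℝ) * z i⌋)
      {z : Fin k → ℝ | (∀ i, ∃ m : ℤ, (N:ℝ) * z i = (m:ℝ)) ∧ ∀ i, |z i| ≤ R} := by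
    intro z1 h1 z2 h2 heq
    funext i
    obtain ⟨m1, hm1⟩ := h1.1 i
    obtain ⟨m2, hm2⟩ := h2.1 i
    have e1 : ⌊(N:ℝ) * z1 i⌋ = m1 := by rw [hm1]; exact Int.floor_intCast m1
    have e2 : ⌊(N:ℝ) * z2 i⌋ = m2 := by rw [hm2]; exact Int.floor_intCast m2
    have : m1 = m2 := by rw [← e1, ← e2]; exact congrFun heq i
    have : (N:ℝ) * z1 i = (N:ℝ) * z2 i := by rw [hm1, hm2, this]
    exact mul_left_cancel₀ hN.ne' this
  apply Set.Finite.of_finite_image ?_ hinj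
  apply Set.Finite.subset
    (Set.Finite.pi fun _ : Fin k => Set.finite_Icc (-⌈(N:ℝ)*R⌉) ⌈(N:ℝ)*R⌉)
  rintro f ⟨z, hz, rfl⟩
  rw [Set.mem_pi]
  intro i _
  obtain ⟨m, hm⟩ := hz.1 i
  have e1 : ⌊(N:ℝ) * z i⌋ = m := by rw [hm]; exact Int.floor_intCast m
  have habs : |(m:ℝ)| ≤ (N:ℝ) * R := by
    rw [← hm, abs_mul, abs_of_pos hN]
    exact mul_le_mul_of_nonneg_left (hz.2 i) hN.le
  rw [abs_le] at habs
  constructor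
  · show -⌈(N:ℝ)*R⌉ ≤ ⌊(N:ℝ) * z i⌋
    rw [e1]
    have : -(⌈(N:ℝ)*R⌉ : ℝ) ≤ (m:ℝ) := le_trans (by linarith [Int.le_ceil ((N:ℝ)*R)]) habs.1
    exact_mod_cast this
  · show ⌊(N:ℝ) * z i⌋ ≤ ⌈(N:ℝ)*R⌉
    rw [e1]
    have : (m:ℝ) ≤ (⌈(N:ℝ)*R⌉ : ℝ) := le_trans habs.2 (Int.le_ceil _)
    exact_mod_cast this

/-- Auxiliary: all coordinates of a vector in the closed positive cone are bounded
by the zeroth coordinate. -/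
lemma aux_abs_le (n : ℕ) (z : Fin (n+1) → ℝ) (hz : z ∈ closedPosCone n) (i : Fin (n+1)) :
    |z i| ≤ z 0 := by
  obtain ⟨hB, h0⟩ := hz
  unfold B at hB
  induction i using Fin.cases with
  | zero => rw [abs_of_nonneg h0]
  | succ j =>
    have h1 : z j.succ * z j.succ ≤ ∑ i : Fin n, z i.succ * z i.succ := by
      apply Finset.single_le_sum (f := fun i : Fin n => z i.succ * z i.succ)
        (fun i _ => mul_self_nonneg _) (Finset.mem_univ j)
    rw [abs_le]
    constructor <;> nlinarith

/-- Auxiliary: reverse Cauchy-Schwarz-type bound for the Minkowski form. -/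
lemma aux_key_ineq (n : ℕ) (x z : Fin (n+1) → ℝ) (hz : z ∈ closedPosCone n) :
    (x 0 - Real.sqrt (∑ i : Fin n, x i.succ ^ 2)) * z 0 ≤ B n x z := by
  obtain ⟨hzB, hz0⟩ := hz
  unfold B at hzB ⊢
  set S := ∑ i : Fin n, x i.succ ^ 2 with hS
  have hSnn : 0 ≤ S := Finset.sum_nonneg fun i _ => sq_nonneg _
  have h2 : ∑ i : Fin n, z i.succ ^ 2 ≤ z 0 ^ 2 := by
    have : ∑ i : Fin n, z i.succ ^ 2 = ∑ i : Fin n, z i.succ * z i.succ := by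
      apply Finset.sum_congr rfl; intro i _; ring
    nlinarith
  have h1 : (∑ i : Fin n, x i.succ * z i.succ) ^ 2 ≤ S * (∑ i : Fin n, z i.succ ^ 2) :=
    Finset.sum_mul_sq_le_sq_mul_sq _ _ _
  have hsum : ∑ i : Fin n, x i.succ * z i.succ ≤ Real.sqrt S * z 0 := by
    calc ∑ i : Fin n, x i.succ * z i.succ ≤ |∑ i : Fin n, x i.succ * z i.succ| := le_abs_self _
      _ = Real.sqrt ((∑ i : Fin n, x i.succ * z i.succ) ^ 2) := (Real.sqrt_sq_eq_abs _).symm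
      _ ≤ Real.sqrt (S * z 0 ^ 2) :=
          Real.sqrt_le_sqrt (h1.trans (mul_le_mul_of_nonneg_left h2 hSnn))
      _ = Real.sqrt S * z 0 := by rw [Real.sqrt_mul hSnn, Real.sqrt_sq hz0]
  nlinarith [hsum]

/-- Local finiteness of the Dirichlet decomposition: the `G`-translates of the Dirichlet
domain `D` form a locally finite collection in the open positive cone. -/
theorem dirichlet_translates_locally_finite (n : ℕ) (hn : 1 ≤ n)
    (G : Subgroup ((Fin (n + 1) → ℝ) ≃ₗ[ℝ] (Fin (n + 1) → ℝ)))
    (hG : ∀ g ∈ G, InOplusZ n g)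
    (Pc : Set (Set (Fin (n + 1) → ℝ)))
    (hPccone : ∀ P ∈ Pc, IsRatPolyCone n P)
    (hPcpos : ∀ P ∈ Pc, P ⊆ closedPosCone n)
    (hPcinv : ∀ g ∈ G, ∀ P ∈ Pc, (g : (Fin (n + 1) → ℝ) ≃ₗ[ℝ] _) '' P ∈ Pc)
    (hPcfin : ∃ P0 ⊆ Pc, P0.Finite ∧
      ∀ P ∈ Pc, ∃ g ∈ G, ∃ P₀ ∈ P0, P = (g : (Fin (n + 1) → ℝ) ≃ₗ[ℝ] _) '' P₀)
    (hconv : Convex ℝ (⋃₀ Pc))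
    (y : Fin (n + 1) → ℚ)
    (hyint : ∃ P ∈ Pc, (fun i => (y i : ℝ)) ∈ interior P)
    (hystab : ∀ g ∈ G, (g : (Fin (n + 1) → ℝ) ≃ₗ[ℝ] _) (fun i => (y i : ℝ)) =
      (fun i => (y i : ℝ)) → g = 1)
    (D : Set (Fin (n + 1) → ℝ))
    (hD : D = {x ∈ closure (⋃₀ Pc) | ∀ g ∈ G,
      B n x (fun i => (y i : ℝ)) ≤ B n x (g (fun i => (y i : ℝ)))})
    (K : Set (Fin (n + 1) → ℝ)) (hK : K ⊆ posCone n) (hKcpt : IsCompact K) :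
    {S : Set (Fin (n + 1) → ℝ) | ∃ g ∈ G,
      S = (g : (Fin (n + 1) → ℝ) ≃ₗ[ℝ] _) '' D ∧ (S ∩ K).Nonempty}.Finite := by
  rcases Set.eq_empty_or_nonempty K with rfl | hKne
  · apply Set.Finite.subset Set.finite_empty
    rintro S ⟨g, hg, rfl, hne⟩
    simp at hne
  set yR : Fin (n + 1) → ℝ := fun i => (y i : ℝ) with hyRdef
  -- `yR` lies in the open positive cone
  have hyRpos : yR ∈ posCone n := by
    obtain ⟨P, hP, hyP⟩ := hyint
    have hPsub := hPcpos P hP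
    obtain ⟨ε, hε, hball⟩ := Metric.mem_nhds_iff.mp (mem_interior_iff_mem_nhds.mp hyP)
    have hw : ∀ t : ℝ, 0 < t → t < ε →
        yR - t • (Pi.single 0 1 : Fin (n + 1) → ℝ) ∈ closedPosCone n := by
      intro t ht htε
      apply hPsub; apply hball
      rw [Metric.mem_ball, dist_eq_norm]
      have h : yR - t • (Pi.single 0 1 : Fin (n + 1) → ℝ) - yR
          = -(t • (Pi.single 0 1 : Fin (n + 1) → ℝ)) := by abel
      rw [h, norm_neg, norm_smul, Pi.norm_single, norm_one, Real.norm_eq_abs,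
        abs_of_pos ht, mul_one]
      exact htε
    have hcoord0 : ∀ t : ℝ, (yR - t • (Pi.single 0 1 : Fin (n + 1) → ℝ)) 0 = yR 0 - t := by
      intro t; simp
    have hcoordsucc : ∀ (t : ℝ) (i : Fin n),
        (yR - t • (Pi.single 0 1 : Fin (n + 1) → ℝ)) i.succ = yR i.succ := by
      intro t i; simp [Pi.single_eq_of_ne (Fin.succ_ne_zero i)]
    have hy0 : 0 < yR 0 := by
      have h := (hw (ε / 2) (by linarith) (by linarith)).2
      rw [hcoord0] at h; linarith
    refine ⟨?_, hy0⟩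
    set t := min (ε / 2) (yR 0) with htdef
    have ht : 0 < t := lt_min (by linarith) hy0
    have htε : t < ε := lt_of_le_of_lt (min_le_left _ _) (by linarith)
    have h := (hw t ht htε).1
    unfold B at h ⊢
    rw [hcoord0] at h
    have hsum : ∑ i : Fin n, (yR - t • (Pi.single 0 1 : Fin (n + 1) → ℝ)) i.succ *
        (yR - t • (Pi.single 0 1 : Fin (n + 1) → ℝ)) i.succ
        = ∑ i : Fin n, yR i.succ * yR i.succ :=
      Finset.sum_congr rfl fun i _ => by rw [hcoordsucc]
    rw [hsum] at h
    have htle : t ≤ yR 0 := min_le_right _ _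
    nlinarith
  -- the common denominator
  set N : ℤ := ∏ j : Fin (n + 1), ((y j).den : ℤ) with hNdef
  have hNpos : (0 : ℝ) < (N : ℝ) := by
    have h : 0 < N := Finset.prod_pos fun j _ => by exact_mod_cast (y j).pos
    exact_mod_cast h
  have hNy : ∀ i, ∃ m : ℤ, (N : ℝ) * yR i = (m : ℝ) := by
    intro i
    refine ⟨(∏ j ∈ Finset.univ.erase i, ((y j).den : ℤ)) * (y i).num, ?_⟩
    have hQ : (N : ℚ) * y i
        = (((∏ j ∈ Finset.univ.erase i, ((y j).den : ℤ)) * (y i).num : ℤ) : ℚ) := by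
      have hsplit : N = ((y i).den : ℤ) * ∏ j ∈ Finset.univ.erase i, ((y j).den : ℤ) :=
        (Finset.mul_prod_erase Finset.univ _ (Finset.mem_univ i)).symm
      rw [hsplit]
      push_cast
      rw [← Rat.mul_den_eq_num]
      ring
    have hR := congrArg (fun q : ℚ => (q : ℝ)) hQ
    simp only [hyRdef]
    push_cast at hR ⊢
    convert hR using 2
  -- max of B(·, yR) on K
  have hBcont : Continuous fun x : Fin (n + 1) → ℝ => B n x yR := by
    unfold B; fun_prop
  obtain ⟨xM, hxM, hM⟩ := hKcpt.exists_isMaxOn hKne hBcont.continuousOn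
  set M := B n xM yR with hMdef
  have hMle : ∀ x ∈ K, B n x yR ≤ M := fun x hx => hM hx
  -- min of x₀ - ‖x'‖ on K
  have hfcont : Continuous fun x : Fin (n + 1) → ℝ =>
      x 0 - Real.sqrt (∑ i : Fin n, x i.succ ^ 2) := by fun_prop
  obtain ⟨xe, hxe, he⟩ := hKcpt.exists_isMinOn hKne hfcont.continuousOn
  set ε := xe 0 - Real.sqrt (∑ i : Fin n, xe i.succ ^ 2) with hεdef
  have hεle : ∀ x ∈ K, ε ≤ x 0 - Real.sqrt (∑ i : Fin n, x i.succ ^ 2) := fun x hx => he hx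
  have hεpos : 0 < ε := by
    obtain ⟨hBx, hx0⟩ := hK hxe
    rw [hεdef, sub_pos]
    unfold B at hBx
    have hsq : ∑ i : Fin n, xe i.succ ^ 2 = ∑ i : Fin n, xe i.succ * xe i.succ :=
      Finset.sum_congr rfl fun i _ => by ring
    rw [Real.sqrt_lt' hx0, hsq]
    nlinarith
  set R := max (M / ε) 0 with hRdef
  set T := {g : (Fin (n + 1) → ℝ) ≃ₗ[ℝ] (Fin (n + 1) → ℝ) |
    g ∈ G ∧ ((g '' D) ∩ K).Nonempty} with hTdef
  have hTsub : (fun g : (Fin (n + 1) → ℝ) ≃ₗ[ℝ] (Fin (n + 1) → ℝ) => g yR) '' T ⊆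
      {z : Fin (n + 1) → ℝ | (∀ i, ∃ m : ℤ, (N : ℝ) * z i = (m : ℝ)) ∧ ∀ i, |z i| ≤ R} := by
    rintro _ ⟨g, ⟨hgG, x, ⟨⟨x', hx'D, rfl⟩, hxK⟩⟩, rfl⟩
    obtain ⟨hBpres, hlat, hpos⟩ := hG g hgG
    have hgy : g yR ∈ posCone n := by rw [← hpos]; exact ⟨yR, hyRpos, rfl⟩
    have hgyc : g yR ∈ closedPosCone n := ⟨hgy.1.le, hgy.2.le⟩
    constructor
    · intro i
      have hmem : ((N : ℝ) • yR) ∈ intLattice n := by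
        intro j; obtain ⟨m, hm⟩ := hNy j; exact ⟨m, by simpa using hm⟩
      have hgl : g ((N : ℝ) • yR) ∈ intLattice n := by
        rw [← hlat]; exact ⟨_, hmem, rfl⟩
      obtain ⟨m, hm⟩ := hgl i
      refine ⟨m, ?_⟩
      rw [map_smul] at hm
      simpa using hm
    · have hx'mem := hx'D
      rw [hD] at hx'mem
      have hdir := hx'mem.2 g⁻¹ (inv_mem hgG)
      have key1 : B n (g x') (g yR) = B n x' yR := hBpres x' yR
      have key2 : B n x' (g⁻¹ yR) = B n (g x') yR := by
        have h := hBpres x' (g⁻¹ yR)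
        rw [show g (g⁻¹ yR) = yR from g.apply_symm_apply yR] at h
        exact h.symm
      have hle : B n (g x') (g yR) ≤ M :=
        calc B n (g x') (g yR) = B n x' yR := key1
          _ ≤ B n x' (g⁻¹ yR) := hdir
          _ = B n (g x') yR := key2
          _ ≤ M := hMle (g x') hxK
      have hkey := aux_key_ineq n (g x') (g yR) hgyc
      have hεx := hεle (g x') hxK
      have hz0 : 0 ≤ (g yR) 0 := hgy.2.le
      have h1 : ε * (g yR) 0 ≤ M := by nlinarith
      have h2 : (g yR) 0 ≤ R :=
        le_max_of_le_left ((le_div_iff₀ hεpos).mpr (by linarith))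
      intro i
      exact (aux_abs_le n (g yR) hgyc i).trans h2
  have hTfin : T.Finite := by
    apply Set.Finite.of_finite_image
      (Set.Finite.subset (aux_lat_finite (n + 1) N hNpos R) hTsub)
    intro g1 hg1 g2 hg2 heq
    have heq' : g1 yR = g2 yR := heq
    have hmem : g2⁻¹ * g1 ∈ G := mul_mem (inv_mem hg2.1) hg1.1
    have happ : (g2⁻¹ * g1) yR = yR := by
      show g2⁻¹ (g1 yR) = yR
      rw [heq']
      exact g2.symm_apply_apply yR
    have h1 := hystab (g2⁻¹ * g1) hmem happ
    rw [inv_mul_eq_one] at h1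
    exact h1.symm
  have heqset : {S : Set (Fin (n + 1) → ℝ) | ∃ g ∈ G,
      S = (g : (Fin (n + 1) → ℝ) ≃ₗ[ℝ] _) '' D ∧ (S ∩ K).Nonempty}
      = (fun g : (Fin (n + 1) → ℝ) ≃ₗ[ℝ] (Fin (n + 1) → ℝ) => g '' D) '' T := by
    ext S
    simp only [Set.mem_setOf_eq, Set.mem_image, hTdef]
    constructor
    · rintro ⟨g, hg, rfl, hne⟩; exact ⟨g, ⟨hg, hne⟩, rfl⟩
    · rintro ⟨g, ⟨hg, hne⟩, rfl⟩; exact ⟨g, hg, rfl, hne⟩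
  rw [heqset]
  exact hTfin.image _
end

section
/- (Negativity lemma, first part.) Let t ∈ ℝ^r be such that the vector M·t has all entries nonnegative, i.e., (M·t)ᵢ ≥ 0 for all i. Then tᵢ ≤ 0 for all i. (Equivalently: if −D = ∑ᵢ tᵢ Nᵢ is a linear combination of curves with negative definite intersection matrix M such that −D has nonnegative intersection with each Nᵢ, then D is effective.) -/
open Matrix


/-- Negativity lemma, first part: if `M` is a symmetric negative definite real matrix with
nonnegative off-diagonal entries and `M·t` has all entries nonnegative, then `t ≤ 0`. -/
theorem negativity_lemma_effective (r : ℕ) (hr : 1 ≤ r)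
    (M : Matrix (Fin r) (Fin r) ℝ) (hsym : M.IsSymm) (hneg : (-M).PosDef)
    (hoff : ∀ i j : Fin r, i ≠ j → 0 ≤ M i j)
    (t : Fin r → ℝ) (ht : ∀ i, 0 ≤ M.mulVec t i) :
    ∀ i, t i ≤ 0 := by
  set p : Fin r → ℝ := fun i => max (t i) 0 with hp
  set n : Fin r → ℝ := fun i => max (-t i) 0 with hn
  have hpn : p = fun i => t i + n i := by
    funext i
    rcases le_total (t i) 0 with h | h
    · simp [hp, hn, max_eq_right h, max_eq_left (by linarith : (0:ℝ) ≤ -t i)]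
    · simp [hp, hn, max_eq_left h, max_eq_right (by linarith : -t i ≤ (0:ℝ))]
  have hp0 : p = 0 := by
    by_contra hpne
    have h1 : 0 < p ⬝ᵥ ((-M).mulVec p) := by
      have := hneg.dotProduct_mulVec_pos hpne
      simpa using this
    have h2 : p ⬝ᵥ ((-M).mulVec p) = -(p ⬝ᵥ M.mulVec t + p ⬝ᵥ M.mulVec n) := by
      rw [Matrix.neg_mulVec, dotProduct_neg]
      congr 1
      have : M.mulVec p = M.mulVec t + M.mulVec n := by
        rw [hpn]
        exact Matrix.mulVec_add M t n
      rw [this, dotProduct_add]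
    have h3 : 0 ≤ p ⬝ᵥ M.mulVec t := by
      apply Finset.sum_nonneg
      intro i _
      exact mul_nonneg (le_max_right _ _) (ht i)
    have hpz : ∀ i, p i * n i = 0 := by
      intro i
      rcases le_total (t i) 0 with h | h
      · simp [hp, max_eq_right h]
      · simp [hn, max_eq_right (by linarith : -t i ≤ (0:ℝ))]
    have h4 : 0 ≤ p ⬝ᵥ M.mulVec n := by
      have : p ⬝ᵥ M.mulVec n = ∑ i, ∑ j, p i * (M i j * n j) := by
        simp [dotProduct, Matrix.mulVec, Finset.mul_sum]
      rw [this]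
      apply Finset.sum_nonneg
      intro i _
      apply Finset.sum_nonneg
      intro j _
      by_cases hij : i = j
      · subst hij
        have : p i * (M i i * n i) = M i i * (p i * n i) := by ring
        rw [this, hpz i, mul_zero]
      · exact mul_nonneg (le_max_right _ _) (mul_nonneg (hoff i j hij) (le_max_right _ _))
    rw [h2] at h1
    linarith
  intro i
  have : max (t i) 0 = 0 := congrFun hp0 i
  have h := le_max_left (t i) 0
  rw [this] at h
  exact h
end

section
/- (Negativity lemma, support part.) Let t ∈ ℝ^r be such that (M·t)ᵢ ≥ 0 for all i. Then for all indices i ≠ j with tᵢ = 0 and M i j > 0, one has tⱼ = 0. Consequently, the set {i : tᵢ < 0} is a union of connected components of the graph on {1,…,r} with an edge between i and j whenever i ≠ j and M i j > 0. (Equivalently: the support of the effective divisor D with −D = ∑ tᵢNᵢ is a union of connected components of N.) -/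
open Matrix

/-- Main negativity lemma: `t ≤ 0` componentwise. -/
lemma negativity_lemma_main (r : ℕ)
    (M : Matrix (Fin r) (Fin r) ℝ) (hneg : (-M).PosDef)
    (hoff : ∀ i j : Fin r, i ≠ j → 0 ≤ M i j)
    (t : Fin r → ℝ) (ht : ∀ i, 0 ≤ M.mulVec t i) :
    ∀ i, t i ≤ 0 := by
  by_contra h
  push_neg at h
  set p : Fin r → ℝ := fun i => max (t i) 0 with hp
  have hpne : p ≠ 0 := by
    obtain ⟨i, hi⟩ := h
    intro h0
    have : p i = 0 := congrFun h0 i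
    simp only [hp] at this
    have := le_max_left (t i) 0
    linarith
  have hposdef := hneg.dotProduct_mulVec_pos hpne
  simp only [star_trivial] at hposdef
  have hval : p ⬝ᵥ ((-M).mulVec p) = -(p ⬝ᵥ (M.mulVec p)) := by
    simp [Matrix.neg_mulVec, dotProduct_neg]
  rw [hval] at hposdef
  -- so p ⬝ᵥ M.mulVec p < 0
  have hlt : p ⬝ᵥ (M.mulVec p) < 0 := by
    have : (0:ℝ) < -(p ⬝ᵥ (M.mulVec p)) := by
      simpa using hposdef
    linarith
  have hpnn : ∀ i, 0 ≤ p i := fun i => le_max_right _ _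
  have hptnn : ∀ i, 0 ≤ p i - t i := fun i => by
    have := le_max_left (t i) 0; simp only [hp]; linarith
  have hpt0 : ∀ i, p i * (p i - t i) = 0 := by
    intro i
    rcases le_or_gt (t i) 0 with h1 | h1
    · have : p i = 0 := by simp [hp, h1]
      rw [this]; ring
    · have : p i = t i := by simp [hp, le_of_lt h1]
      rw [this]; ring
  have hge : 0 ≤ p ⬝ᵥ (M.mulVec p) := by
    have hexp : p ⬝ᵥ (M.mulVec p) =
        (∑ i, p i * M.mulVec t i) + ∑ i, ∑ j, p i * (M i j * (p j - t j)) := by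
      simp only [dotProduct, Matrix.mulVec, dotProduct, ← Finset.sum_add_distrib,
        Finset.mul_sum]
      congr 1; ext i
      exact Finset.sum_congr rfl fun j _ => by ring
    rw [hexp]
    have h1 : 0 ≤ ∑ i, p i * M.mulVec t i :=
      Finset.sum_nonneg fun i _ => mul_nonneg (hpnn i) (ht i)
    have h2 : 0 ≤ ∑ i, ∑ j, p i * (M i j * (p j - t j)) := by
      apply Finset.sum_nonneg; intro i _
      apply Finset.sum_nonneg; intro j _
      rcases eq_or_ne i j with rfl | hij
      · have : p i * (M i i * (p i - t i)) = M i i * (p i * (p i - t i)) := by ring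
        rw [this, hpt0 i, mul_zero]
      · exact mul_nonneg (hpnn i) (mul_nonneg (hoff i j hij) (hptnn j))
    linarith
  linarith

/-- Negativity lemma, support part: if `M` is a symmetric negative definite real matrix
with nonnegative off-diagonal entries and `M·t` has all entries nonnegative, then whenever
`tᵢ = 0` and `M i j > 0` (for `i ≠ j`) also `tⱼ = 0`; consequently the set `{i : tᵢ < 0}`
is a union of connected components of the graph with an edge between `i` and `j` whenever
`i ≠ j` and `M i j > 0`. -/
theorem negativity_lemma_support (r : ℕ) (hr : 1 ≤ r)
    (M : Matrix (Fin r) (Fin r) ℝ) (hsym : M.IsSymm) (hneg : (-M).PosDef)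
    (hoff : ∀ i j : Fin r, i ≠ j → 0 ≤ M i j)
    (t : Fin r → ℝ) (ht : ∀ i, 0 ≤ M.mulVec t i) :
    (∀ i j : Fin r, i ≠ j → t i = 0 → 0 < M i j → t j = 0) ∧
    (∀ i j : Fin r, Relation.ReflTransGen (fun a b => a ≠ b ∧ 0 < M a b) i j →
      t i < 0 → t j < 0) := by
  have hle := negativity_lemma_main r M hneg hoff t ht
  have part1 : ∀ i j : Fin r, i ≠ j → t i = 0 → 0 < M i j → t j = 0 := by
    intro i j hij hti hMij
    have hsum : M.mulVec t i = ∑ k, M i k * t k := rfl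
    have hterm : ∀ k ∈ Finset.univ, M i k * t k ≤ 0 := by
      intro k _
      rcases eq_or_ne i k with rfl | hik
      · rw [hti]; simp
      · exact mul_nonpos_of_nonneg_of_nonpos (hoff i k hik) (hle k)
    have hzero : ∀ k ∈ Finset.univ, M i k * t k = 0 := by
      have hsle : ∑ k, M i k * t k ≤ 0 := Finset.sum_nonpos hterm
      have hsge : 0 ≤ ∑ k, M i k * t k := by rw [← hsum]; exact ht i
      have hs0 : ∑ k, M i k * t k = 0 := le_antisymm hsle hsge
      exact (Finset.sum_eq_zero_iff_of_nonpos hterm).mp hs0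
    have := hzero j (Finset.mem_univ j)
    rcases mul_eq_zero.mp this with h | h
    · exact absurd h (ne_of_gt hMij)
    · exact h
  refine ⟨part1, fun i j hrel hti => ?_⟩
  induction hrel with
  | refl => exact hti
  | tail hbc hedge ih =>
    rename_i b c
    rcases lt_or_eq_of_le (hle c) with h | h
    · exact h
    · exfalso
      have hMcb : 0 < M c b := by
        have := hsym.apply b c  -- M c b = M b c ?
        rw [← Matrix.IsSymm.apply hsym b c] at hedge
        exact hedge.2
      have := part1 c b hedge.1.symm h hMcb
      linarith
end

section
/- There exists a vector a ∈ ℝ^r with aᵢ > 0 for all i and (M·a)ᵢ = −1 for all i. (Equivalently: there is a positive linear combination D = ∑ aᵢNᵢ of the curves Nᵢ with D·Nᵢ = −1 for all i.) -/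
/-- For a symmetric negative definite real matrix `M` with nonnegative off-diagonal
entries, there is a strictly positive vector `a` with `M·a = -1` in every entry. -/
theorem exists_positive_with_mulVec_neg_one (r : ℕ) (hr : 1 ≤ r)
    (M : Matrix (Fin r) (Fin r) ℝ) (hsym : M.IsSymm) (hneg : (-M).PosDef)
    (hoff : ∀ i j : Fin r, i ≠ j → 0 ≤ M i j) :
    ∃ a : Fin r → ℝ, (∀ i, 0 < a i) ∧ ∀ i, M.mulVec a i = -1 := by
  have hdet : IsUnit (-M).det := (Matrix.isUnit_iff_isUnit_det _).1 hneg.isUnit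
  have : Invertible (-M) := (-M).invertibleOfIsUnitDet hdet
  set a : Fin r → ℝ := (-M)⁻¹.mulVec (fun _ => 1) with ha
  have hMa : ∀ i, M.mulVec a i = -1 := by
    have h : (-M).mulVec a = fun _ => 1 := by
      rw [ha, Matrix.mulVec_mulVec, Matrix.mul_nonsing_inv _ hdet, Matrix.one_mulVec]
    intro i
    have := congrFun h i
    simp [Matrix.neg_mulVec, Pi.neg_apply] at this
    linarith
  -- b is the negative part of a
  set b : Fin r → ℝ := fun i => max (-(a i)) 0 with hb
  set p : Fin r → ℝ := fun i => max (a i) 0 with hp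
  have hbnn : ∀ i, 0 ≤ b i := fun i => le_max_right _ _
  have hpnn : ∀ i, 0 ≤ p i := fun i => le_max_right _ _
  have hpb : ∀ i, a i = p i - b i := by
    intro i
    rcases le_or_gt (a i) 0 with h | h
    · simp [hp, hb, max_eq_right h, max_eq_left (neg_nonneg.2 h)]
    · simp [hp, hb, max_eq_left h.le, max_eq_right (neg_nonpos.2 h.le)]
  have hbp0 : ∀ i, b i * p i = 0 := by
    intro i
    rcases le_or_gt (a i) 0 with h | h
    · simp [hp, max_eq_right h]
    · simp [hb, max_eq_right (neg_nonpos.2 h.le)]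
  -- key: bᵀ M b ≥ 0
  have hquad : 0 ≤ dotProduct b (M.mulVec b) := by
    have hsplit : dotProduct b (M.mulVec b) = dotProduct b (M.mulVec p) - dotProduct b (M.mulVec a) := by
      have : p = a + b := by funext i; simp only [Pi.add_apply]; linarith [hpb i]
      rw [this, Matrix.mulVec_add, dotProduct_add]; ring
    have h1 : 0 ≤ dotProduct b (M.mulVec p) := by
      simp only [dotProduct, Matrix.mulVec, Finset.mul_sum]
      apply Finset.sum_nonneg
      intro i _
      apply Finset.sum_nonneg
      intro j _
      rcases eq_or_ne i j with h | h
      · subst h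
        rcases le_or_gt (a i) 0 with h | h
        · simp [hp, max_eq_right h]
        · simp [hb, max_eq_right (neg_nonpos.2 h.le)]
      · have := hoff i j h
        have := hbnn i
        have := hpnn j
        positivity
    have h2 : dotProduct b (M.mulVec a) ≤ 0 := by
      simp only [dotProduct]
      apply Finset.sum_nonpos
      intro i _
      rw [hMa i]
      nlinarith [hbnn i]
    linarith
  have hb0 : b = 0 := by
    by_contra h
    have := hneg.dotProduct_mulVec_pos h
    simp only [Matrix.neg_mulVec, dotProduct_neg, RCLike.star_def] at this
    have hstar : star b = b := by funext i; simp
    rw [hstar] at this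
    linarith
  have hann : ∀ i, 0 ≤ a i := by
    intro i
    have := congrFun hb0 i
    simp [hb] at this
    linarith [le_max_left (-(a i)) (0:ℝ), this]
  refine ⟨a, fun i => ?_, hMa⟩
  rcases lt_or_eq_of_le (hann i) with h | h
  · exact h
  · exfalso
    have hMai := hMa i
    simp only [Matrix.mulVec, dotProduct] at hMai
    have : (0:ℝ) ≤ ∑ j, M i j * a j := by
      apply Finset.sum_nonneg
      intro j _
      rcases eq_or_ne i j with hij | hij
      · rw [← hij, ← h]; simp
      · exact mul_nonneg (hoff i j hij) (hann j)
    linarith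
end

section
/- (Hodge-index proportionality.) Let u ∈ V be a nonzero null vector with u₀ > 0, and let v ∈ V lie in the closed positive cone, i.e., B(v,v) ≥ 0 and v₀ ≥ 0. If B(u,v) = 0, then v is a nonnegative multiple of u: there exists a real c ≥ 0 with v = c·u. -/
/-- Hodge-index proportionality: if `u` is a nonzero future-pointing null vector and `v`
lies in the closed positive cone with `B(u,v) = 0`, then `v` is a nonnegative multiple
of `u`. -/
theorem null_orthogonal_proportional (n : ℕ) (hn : 1 ≤ n)
    (u v : Fin (n + 1) → ℝ) (hu : u ≠ 0) (hunull : B n u u = 0) (hu0 : 0 < u 0)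
    (hv : 0 ≤ B n v v) (hv0 : 0 ≤ v 0) (huv : B n u v = 0) :
    ∃ c : ℝ, 0 ≤ c ∧ v = c • u := by
  set c : ℝ := v 0 / u 0 with hc
  have hcnn : 0 ≤ c := div_nonneg hv0 hu0.le
  unfold B at hunull hv huv
  have hcu : c * u 0 = v 0 := div_mul_cancel₀ _ hu0.ne'
  have hsum : ∑ i : Fin n, (v i.succ - c * u i.succ) ^ 2 = 0 := by
    have hexp : ∑ i : Fin n, (v i.succ - c * u i.succ) ^ 2
        = (∑ i : Fin n, v i.succ * v i.succ)
          - 2 * c * (∑ i : Fin n, u i.succ * v i.succ)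
          + c ^ 2 * (∑ i : Fin n, u i.succ * u i.succ) := by
      rw [Finset.mul_sum, Finset.mul_sum, ← Finset.sum_sub_distrib,
        ← Finset.sum_add_distrib]
      apply Finset.sum_congr rfl
      intro i _
      ring
    have h1 : ∑ i : Fin n, u i.succ * u i.succ = u 0 * u 0 := by linarith
    have h2 : ∑ i : Fin n, u i.succ * v i.succ = u 0 * v 0 := by linarith
    have h3 : ∑ i : Fin n, v i.succ * v i.succ ≤ v 0 * v 0 := by linarith
    have hle : ∑ i : Fin n, (v i.succ - c * u i.succ) ^ 2 ≤ 0 := by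
      rw [hexp, h1, h2]
      have : c ^ 2 * (u 0 * u 0) = v 0 * v 0 := by
        rw [pow_two]; nlinarith [hcu]
      nlinarith [hcu]
    have hge : 0 ≤ ∑ i : Fin n, (v i.succ - c * u i.succ) ^ 2 :=
      Finset.sum_nonneg fun i _ => sq_nonneg _
    linarith
  have hzero : ∀ i : Fin n, v i.succ - c * u i.succ = 0 := by
    intro i
    have := (Finset.sum_eq_zero_iff_of_nonneg
      (fun j _ => sq_nonneg (v j.succ - c * u j.succ))).mp hsum i (Finset.mem_univ i)
    exact pow_eq_zero_iff two_ne_zero |>.mp this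
  refine ⟨c, hcnn, funext fun i => ?_⟩
  rcases Fin.eq_zero_or_eq_succ i with h0 | ⟨j, hj⟩
  · subst h0; simpa [Pi.smul_apply, smul_eq_mul] using hcu.symm
  · subst hj
    have := hzero j
    simp only [Pi.smul_apply, smul_eq_mul]
    linarith
end
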